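/- arXiv:1509.07749 — 2 statements merged into one kernel-verified Lean document; each statement's English description precedes it below -/
import Mathlib

section
/- Fix real numbers s > 0 and consider the family of slope functions μ_{t'}(x, c, k) = ((1 - s/t')·x + k) / ((s - t'/2)·c) for t' ∈ (0, s), where c > 0 and x, k are real. Suppose x ≥ 0, and suppose for some t ∈ (0, s) that μ_t(x, c_F, k_F) ≤ k/((s - t/2)·c) where c, c_F > 0. Then for all t' with 0 < t' < t: μ_{t'}(x, c_F, k_F) - k/((s - t'/2)·c) ≤ (s·(t'-t)/(t·t'·(s - t'/2)))·(x/c_F) ≤ 0, with equality for some t' < t only if x = 0. -/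
/-- Slope computation at the heart of Lemma `adiabstablemma`. -/
theorem stmt2 (s t c cF x kF k : ℝ)
    (hs : 0 < s) (ht : 0 < t) (hts : t < s)
    (hc : 0 < c) (hcF : 0 < cF) (hx : 0 ≤ x)
    (hslope : ((1 - s / t) * x + kF) / ((s - t / 2) * cF) ≤ k / ((s - t / 2) * c)) :
    ∀ t' : ℝ, 0 < t' → t' < t →
      (((1 - s / t') * x + kF) / ((s - t' / 2) * cF) - k / ((s - t' / 2) * c)
          ≤ (s * (t' - t) / (t * t' * (s - t' / 2))) * (x / cF)
        ∧ (s * (t' - t) / (t * t' * (s - t' / 2))) * (x / cF) ≤ 0)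
      ∧ ((s * (t' - t) / (t * t' * (s - t' / 2))) * (x / cF) = 0 → x = 0) := by
  intro t' ht' htt'
  have hD2 : 0 < s - t / 2 := by linarith
  have hD : 0 < s - t' / 2 := by linarith
  have hkey : ((1 - s / t) * x + kF) * c ≤ k * cF := by
    rw [div_le_div_iff₀ (by positivity) (by positivity)] at hslope
    nlinarith [hslope]
  have hneg : s * (t' - t) / (t * t' * (s - t' / 2)) ≤ 0 := by
    apply div_nonpos_of_nonpos_of_nonneg
    · nlinarith
    · positivity
  have hnegx : (s * (t' - t) / (t * t' * (s - t' / 2))) * (x / cF) ≤ 0 :=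
    mul_nonpos_of_nonpos_of_nonneg hneg (by positivity)
  have ht0 : t ≠ 0 := ne_of_gt ht
  have ht'0 : t' ≠ 0 := ne_of_gt ht'
  have hDne : (s - t' / 2) ≠ 0 := ne_of_gt hD
  have hcne : c ≠ 0 := ne_of_gt hc
  have hcFne : cF ≠ 0 := ne_of_gt hcF
  have hA : (1 - s / t') * x + kF = ((1 - s / t) * x + kF) + s * (t' - t) / (t * t') * x := by
    field_simp
    ring
  have hkey2 : ((1 - s / t') * x + kF) * c ≤ k * cF + s * (t' - t) / (t * t') * (x * c) := by
    rw [hA]; ring_nf; ring_nf at hkey; linarith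
  refine ⟨⟨?_, hnegx⟩, ?_⟩
  · have e1 : ((1 - s / t') * x + kF) / ((s - t' / 2) * cF) - k / ((s - t' / 2) * c)
        = (((1 - s / t') * x + kF) * c - k * cF) / ((s - t' / 2) * (cF * c)) := by
      rw [div_sub_div _ _ (mul_ne_zero hDne hcFne) (mul_ne_zero hDne hcne),
        div_eq_div_iff (by positivity) (by positivity)]
      ring
    have e2 : (s * (t' - t) / (t * t' * (s - t' / 2))) * (x / cF)
        = (s * (t' - t) / (t * t') * (x * c)) / ((s - t' / 2) * (cF * c)) := by
      rw [div_mul_div_comm, div_eq_div_iff (by positivity) (by positivity)]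
      field_simp
    rw [e1, e2]
    exact div_le_div_of_nonneg_right (by linarith) (by positivity) |>.trans_eq rfl
  · intro heq
    have h1 : s * (t' - t) / (t * t' * (s - t' / 2)) < 0 := by
      apply div_neg_of_neg_of_pos
      · nlinarith
      · positivity
    have h2 : x / cF = 0 := by
      rcases mul_eq_zero.mp heq with h | h
      · exact absurd h (ne_of_lt h1)
      · exact h
    have := (div_eq_zero_iff.mp h2)
    rcases this with h | h
    · exact h
    · exact absurd h (ne_of_gt hcF)
end

section
/- Let a, b, s, t be real numbers with 0 < t < s, a a nonzero integer. Suppose the class α = a·Ξ + b·f on the lattice with Gram matrix [[-2,1],[1,0]] satisfies α·ω = 0 where ω = t·Ξ + 2s·f. Then b = 2a(1 - s/t), and -α² = 2a²·(2s/t - 1). In particular, if -α² ≤ 2·r·r₁·r₂·δ with 1 ≤ r₁, r₂ ≤ r integers and δ ≥ 0 real, then t/s ≥ 2/(1 + r³δ). -/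
/-- Wall-bound computation of Lemma `wallbound`: for α = aΞ + bf with
α·ω = -2at + 2as + bt = 0 (ω = tΞ + 2sf on the lattice Ξ² = -2, Ξ·f = 1, f² = 0)
and α² = -2a² + 2ab. -/
theorem stmt10 (a : ℤ) (b s t : ℝ) (ha : a ≠ 0) (ht : 0 < t) (hts : t < s)
    (horth : -2 * (a : ℝ) * t + 2 * (a : ℝ) * s + b * t = 0) :
    b = 2 * (a : ℝ) * (1 - s / t) ∧
    -((-2) * (a : ℝ) ^ 2 + 2 * (a : ℝ) * b) = 2 * (a : ℝ) ^ 2 * (2 * s / t - 1) ∧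
    ∀ r r₁ r₂ : ℤ, 1 ≤ r₁ → r₁ ≤ r → 1 ≤ r₂ → r₂ ≤ r →
      ∀ δ : ℝ, 0 ≤ δ →
        -((-2) * (a : ℝ) ^ 2 + 2 * (a : ℝ) * b) ≤ 2 * (r : ℝ) * r₁ * r₂ * δ →
        t / s ≥ 2 / (1 + (r : ℝ) ^ 3 * δ) := by
  have ht' : t ≠ 0 := ne_of_gt ht
  have hb : b = 2 * (a : ℝ) * (1 - s / t) := by
    field_simp
    linarith [horth]
  have ha2 : (1 : ℝ) ≤ (a : ℝ) ^ 2 := by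
    have : (1 : ℤ) ≤ a ^ 2 := by
      have := Int.one_le_abs (by simpa using ha)
      nlinarith [sq_abs a]
    exact_mod_cast this
  have hsq : -((-2) * (a : ℝ) ^ 2 + 2 * (a : ℝ) * b)
      = 2 * (a : ℝ) ^ 2 * (2 * s / t - 1) := by
    rw [hb]; field_simp; ring
  refine ⟨hb, hsq, ?_⟩
  intro r r₁ r₂ h1 h1r h2 h2r δ hδ hle
  rw [hsq] at hle
  have hr1 : (1 : ℝ) ≤ (r : ℝ) := by exact_mod_cast le_trans h1 h1r
  have hrr1 : (r₁ : ℝ) ≤ (r : ℝ) := by exact_mod_cast h1r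
  have hrr2 : (r₂ : ℝ) ≤ (r : ℝ) := by exact_mod_cast h2r
  have hr1' : (1 : ℝ) ≤ (r₁ : ℝ) := by exact_mod_cast h1
  have hr2' : (1 : ℝ) ≤ (r₂ : ℝ) := by exact_mod_cast h2
  have hdiv : 2 * s / t = 2 * (s / t) := mul_div_assoc 2 s t
  rw [hdiv] at hle
  have key : 2 * (s / t) - 1 ≤ (r : ℝ) ^ 3 * δ := by
    have hpos : (0 : ℝ) < 2 * (s / t) - 1 := by
      have : 1 < s / t := (one_lt_div ht).mpr hts
      linarith
    have h1 : 2 * (s / t) - 1 ≤ (r : ℝ) * r₁ * r₂ * δ := by nlinarith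
    have hmono : (r : ℝ) * r₁ * r₂ ≤ (r : ℝ) ^ 3 := by
      have h12 : (r : ℝ) * r₁ ≤ r * r := by nlinarith
      calc (r : ℝ) * r₁ * r₂ ≤ (r : ℝ) * r * r := by nlinarith
        _ = (r : ℝ) ^ 3 := by ring
    have := mul_le_mul_of_nonneg_right hmono hδ
    linarith
  have hst : 2 * s ≤ t * (1 + (r : ℝ) ^ 3 * δ) := by
    have h2 : s / t ≤ (1 + (r : ℝ) ^ 3 * δ) / 2 := by linarith
    have := (div_le_iff₀ ht).mp h2
    linarith
  have hden : (0 : ℝ) < 1 + (r : ℝ) ^ 3 * δ := by nlinarith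
  rw [ge_iff_le, div_le_div_iff₀ hden (lt_trans ht hts)]
  linarith
end
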